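/- Assume additionally (Monotonicity) W1 ≥ W0 P-almost surely. Then the first-stage contrast of the instrument on treatment uptake identifies the proportion of compliers: E[W | Z = 1] − E[W | Z = 0] = P(C), where C = {W1 > W0}. -/

import Mathlib

open MeasureTheory ProbabilityTheory

/-- Conditional mean given an event: `E[U | A] := E[U · 1_A] / P(A)`. -/
noncomputable def condMean {Ω : Type*} [MeasurableSpace Ω] (P : Measure Ω)
    (U : Ω → ℝ) (A : Set Ω) : ℝ :=
  (∫ ω in A, U ω ∂P) / (P A).toReal

lemma bin_setIntegral {Ω : Type*} [MeasurableSpace Ω] (P : Measure Ω) [IsFiniteMeasure P]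
    {V : Ω → ℝ} (hV : Measurable V) (hbin : ∀ ω, V ω = 0 ∨ V ω = 1)
    {A : Set Ω} (_hA : MeasurableSet A) :
    ∫ ω in A, V ω ∂P = (P (A ∩ {ω | V ω = 1})).toReal := by
  have h1 : ∀ ω, V ω = Set.indicator {ω | V ω = 1} (fun _ => (1:ℝ)) ω := by
    intro ω
    rcases hbin ω with h | h <;> simp [Set.indicator, h]
  have hs : MeasurableSet {ω | V ω = 1} := hV (measurableSet_singleton 1)
  calc ∫ ω in A, V ω ∂P
      = ∫ ω in A, Set.indicator {ω | V ω = 1} (fun _ => (1:ℝ)) ω ∂P := by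
        exact integral_congr_ae (Filter.Eventually.of_forall fun ω => h1 ω)
    _ = ∫ ω in A ∩ {ω | V ω = 1}, (1:ℝ) ∂P := setIntegral_indicator hs
    _ = (P (A ∩ {ω | V ω = 1})).toReal := by
        rw [setIntegral_const]; simp; rfl

theorem first_stage_identifies_complier_share
    {Ω : Type*} [MeasurableSpace Ω] (P : Measure Ω) [IsProbabilityMeasure P]
    (Z W0 W1 Y0 Y1 : Ω → ℝ)
    (hZ : Measurable Z) (hW0 : Measurable W0) (hW1 : Measurable W1)
    (hY0 : Measurable Y0) (hY1 : Measurable Y1)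
    (hZbin : ∀ ω, Z ω = 0 ∨ Z ω = 1)
    (hW0bin : ∀ ω, W0 ω = 0 ∨ W0 ω = 1)
    (hW1bin : ∀ ω, W1 ω = 0 ∨ W1 ω = 1)
    (W Y : Ω → ℝ)
    (hWdef : ∀ ω, W ω = Z ω * W1 ω + (1 - Z ω) * W0 ω)
    (hYdef : ∀ ω, Y ω = W ω * Y1 ω + (1 - W ω) * Y0 ω)
    (hindep : IndepFun Z (fun ω => (Y0 ω, Y1 ω, W0 ω, W1 ω)) P)
    (hoverlap : 0 < P {ω | Z ω = 1} ∧ P {ω | Z ω = 1} < 1)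
    (hmono : ∀ᵐ ω ∂P, W0 ω ≤ W1 ω) :
    condMean P W {ω | Z ω = 1} - condMean P W {ω | Z ω = 0}
      = (P {ω | W0 ω < W1 ω}).toReal := by
  set A1 : Set Ω := {ω | Z ω = 1} with hA1
  set A0 : Set Ω := {ω | Z ω = 0} with hA0
  set s0 : Set Ω := {ω | W0 ω = 1} with hs0
  set s1 : Set Ω := {ω | W1 ω = 1} with hs1
  have hmA1 : MeasurableSet A1 := hZ (measurableSet_singleton 1)
  have hmA0 : MeasurableSet A0 := hZ (measurableSet_singleton 0)
  have hms0 : MeasurableSet s0 := hW0 (measurableSet_singleton 1)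
  have hms1 : MeasurableSet s1 := hW1 (measurableSet_singleton 1)
  -- independence of Z with W1 and with W0
  have hZW1 : IndepFun Z W1 P :=
    hindep.comp measurable_id (measurable_snd.comp (measurable_snd.comp measurable_snd))
  have hZW0 : IndepFun Z W0 P :=
    hindep.comp measurable_id (measurable_fst.comp (measurable_snd.comp measurable_snd))
  have hmul1 : P (A1 ∩ s1) = P A1 * P s1 := by
    have := hZW1.measure_inter_preimage_eq_mul {1} {1}
      (measurableSet_singleton 1) (measurableSet_singleton 1)
    simpa [A1, s1, Set.preimage, Set.mem_singleton_iff] using this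
  have hmul0 : P (A0 ∩ s0) = P A0 * P s0 := by
    have := hZW0.measure_inter_preimage_eq_mul {0} {1}
      (measurableSet_singleton 0) (measurableSet_singleton 1)
    simpa [A0, s0, Set.preimage, Set.mem_singleton_iff] using this
  -- W coincides with W1 on A1 and with W0 on A0
  have hInt1 : ∫ ω in A1, W ω ∂P = (P (A1 ∩ s1)).toReal := by
    have : ∫ ω in A1, W ω ∂P = ∫ ω in A1, W1 ω ∂P := by
      refine setIntegral_congr_fun hmA1 fun ω hω => ?_
      have hz : Z ω = 1 := hω
      simp [hWdef ω, hz]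
    rw [this]
    exact bin_setIntegral P hW1 hW1bin hmA1
  have hInt0 : ∫ ω in A0, W ω ∂P = (P (A0 ∩ s0)).toReal := by
    have : ∫ ω in A0, W ω ∂P = ∫ ω in A0, W0 ω ∂P := by
      refine setIntegral_congr_fun hmA0 fun ω hω => ?_
      have hz : Z ω = 0 := hω
      simp [hWdef ω, hz]
    rw [this]
    exact bin_setIntegral P hW0 hW0bin hmA0
  -- measures of A1 and A0
  have hA0compl : A0 = A1ᶜ := by
    ext ω
    rcases hZbin ω with h | h <;> simp [A0, A1, h]
  have hPA0 : P A0 = 1 - P A1 := by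
    rw [hA0compl, measure_compl hmA1 (measure_ne_top P A1)]
    simp
  have hA1ne : (P A1).toReal ≠ 0 := by
    have := hoverlap.1
    simp [ENNReal.toReal_eq_zero_iff, this.ne', measure_ne_top P A1]
  have hA0ne : (P A0).toReal ≠ 0 := by
    have hpos : 0 < P A0 := by
      rw [hPA0]
      exact tsub_pos_of_lt hoverlap.2
    simp [ENNReal.toReal_eq_zero_iff, hpos.ne', measure_ne_top P A0]
  have hc1 : condMean P W A1 = (P s1).toReal := by
    rw [condMean, hInt1, hmul1, ENNReal.toReal_mul, mul_div_assoc,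
      mul_comm]
    field_simp
  have hc0 : condMean P W A0 = (P s0).toReal := by
    rw [condMean, hInt0, hmul0, ENNReal.toReal_mul, mul_div_assoc,
      mul_comm]
    field_simp
  -- complier set
  have hCset : {ω | W0 ω < W1 ω} = s1 \ s0 := by
    ext ω
    rcases hW0bin ω with h0 | h0 <;> rcases hW1bin ω with h1 | h1 <;>
      simp [s0, s1, h0, h1]
  have hnull : P (s0 \ s1) = 0 := by
    rw [← Set.setOf_and] at *
    refine measure_mono_null ?_ (by
      have : P {ω | ¬ W0 ω ≤ W1 ω} = 0 := by
        simpa [ae_iff] using hmono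
      exact this)
    intro ω hω
    simp only [Set.mem_diff, s0, s1, Set.mem_setOf_eq] at hω
    have h1 : W1 ω = 0 := (hW1bin ω).resolve_right hω.2
    simp [Set.mem_setOf_eq, hω.1, h1]
  have key : P s1 = P s0 + P (s1 \ s0) := by
    have e1 : P s1 = P (s1 ∩ s0) + P (s1 \ s0) := (measure_inter_add_diff s1 hms0).symm
    have e0 : P s0 = P (s0 ∩ s1) + P (s0 \ s1) := (measure_inter_add_diff s0 hms1).symm
    rw [e1, e0, hnull, add_zero, Set.inter_comm]
  rw [hc1, hc0, hCset]
  have hfin : P (s1 \ s0) ≠ ⊤ := measure_ne_top _ _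
  have hfin0 : P s0 ≠ ⊤ := measure_ne_top _ _
  rw [key, ENNReal.toReal_add hfin0 hfin]
  ring
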